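/- Let α > 0, b > 0, ν ≤ 0, let μ : [0,b] × [0,∞) → ℝ be continuous with μ(z,t) ≤ 0 for all (z,t), and let w : [0,b] × [0,∞) → ℝ be twice continuously differentiable in z and continuously differentiable in t with ∂_t w jointly continuous, satisfying ∂_t w(z,t) = α ∂_z² w(z,t) + μ(z,t) w(z,t) for z ∈ (0,b), w(0,t) = 0, and ∂_z w(b,t) = ν w(b,t). Then the energy E(t) = ∫₀ᵇ w(z,t)² dz decays exponentially: E(t) ≤ E(0)·exp(−(4α/b²)·t) for all t ≥ 0. -/

import Mathlib

open intervalIntegral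

lemma poincare_sq (b : ℝ) (hb : 0 < b) (f : ℝ → ℝ) (hf : ContDiff ℝ 1 f)
    (h0 : f 0 = 0) :
    ∫ z in (0:ℝ)..b, f z ^ 2 ≤ b ^ 2 / 2 * ∫ z in (0:ℝ)..b, deriv f z ^ 2 := by
  have hfd : Differentiable ℝ f := hf.differentiable one_ne_zero
  have hf' : Continuous (deriv f) := hf.continuous_deriv le_rfl
  set I1 : ℝ → ℝ := fun z => ∫ s in (0:ℝ)..z, deriv f s with hI1
  set I2 : ℝ → ℝ := fun z => ∫ s in (0:ℝ)..z, deriv f s ^ 2 with hI2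
  have hfz : ∀ z, f z = I1 z := by
    intro z
    show f z = ∫ s in (0:ℝ)..z, deriv f s
    rw [intervalIntegral.integral_deriv_eq_sub (fun x _ => (hfd x)) ((hf'.intervalIntegrable _ _)), h0, sub_zero]
  have hI1d : ∀ z, HasDerivAt I1 (deriv f z) z := fun z =>
    (hf'.integral_hasStrictDerivAt 0 z).hasDerivAt
  have hI2d : ∀ z, HasDerivAt I2 (deriv f z ^ 2) z := fun z =>
    ((hf'.pow 2).integral_hasStrictDerivAt 0 z).hasDerivAt
  -- g z = z * I2 z - I1 z ^ 2 is monotone on [0,b]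
  set g : ℝ → ℝ := fun z => z * I2 z - I1 z ^ 2 with hg
  have hgd : ∀ z, HasDerivAt g (I2 z + z * deriv f z ^ 2 - 2 * I1 z * deriv f z) z := by
    intro z
    have h1 : HasDerivAt (fun z => z * I2 z) (1 * I2 z + z * deriv f z ^ 2) z :=
      (hasDerivAt_id z).mul (hI2d z)
    have h2 : HasDerivAt (fun z => I1 z ^ 2) ((2:ℕ) * I1 z ^ 1 * deriv f z) z := (hI1d z).pow 2
    have : HasDerivAt (fun z => z * I2 z - I1 z ^ 2) (1 * I2 z + z * deriv f z ^ 2 - (2:ℕ) * I1 z ^ 1 * deriv f z) z := h1.sub h2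
    convert this using 1
    push_cast
    ring
  have hg'nonneg : ∀ z ∈ Set.Ioo (0:ℝ) b, 0 ≤ I2 z + z * deriv f z ^ 2 - 2 * I1 z * deriv f z := by
    intro z hz
    have hz0 : (0:ℝ) ≤ z := hz.1.le
    set c := deriv f z with hc
    have key : 2 * I1 z * c ≤ z * c ^ 2 + I2 z := by
      have h1 : (∫ s in (0:ℝ)..z, 2 * c * deriv f s) ≤ ∫ s in (0:ℝ)..z, (c ^ 2 + deriv f s ^ 2) := by
        apply intervalIntegral.integral_mono_on hz0
        · exact (continuous_const.mul hf').intervalIntegrable _ _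
        · exact (continuous_const.add (hf'.pow 2)).intervalIntegrable _ _
        · intro x _
          nlinarith [sq_nonneg (c - deriv f x)]
      rw [intervalIntegral.integral_const_mul] at h1
      rw [intervalIntegral.integral_add ((continuous_const (y := c^2)).intervalIntegrable _ _)
        (show IntervalIntegrable (fun s => deriv f s ^ 2) MeasureTheory.volume 0 z from (hf'.pow 2).intervalIntegrable _ _)] at h1
      simp only [intervalIntegral.integral_const, smul_eq_mul, sub_zero] at h1
      calc 2 * I1 z * c = 2 * c * I1 z := by ring
        _ ≤ z * c ^ 2 + I2 z := h1
    linarith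
  have hgcont : Continuous g := by
    have : Differentiable ℝ g := fun z => (hgd z).differentiableAt
    exact this.continuous
  have hgmono : MonotoneOn g (Set.Icc 0 b) := by
    apply monotoneOn_of_deriv_nonneg (convex_Icc 0 b) hgcont.continuousOn
    · intro z hz
      exact ((hgd z).differentiableAt).differentiableWithinAt
    · intro z hz
      rw [interior_Icc] at hz
      rw [(hgd z).deriv]
      exact hg'nonneg z hz
  -- pointwise bound: f z ^ 2 ≤ z * I2 b for z ∈ [0,b]
  have hI2mono : ∀ z ∈ Set.Icc (0:ℝ) b, I2 z ≤ I2 b := by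
    intro z hz
    have hadj : I2 z + (∫ s in z..b, deriv f s ^ 2) = I2 b :=
      intervalIntegral.integral_add_adjacent_intervals ((hf'.pow 2).intervalIntegrable _ _)
        ((hf'.pow 2).intervalIntegrable _ _)
    have hpos : 0 ≤ ∫ s in z..b, deriv f s ^ 2 :=
      intervalIntegral.integral_nonneg hz.2 (fun x _ => sq_nonneg _)
    linarith
  have hpt : ∀ z ∈ Set.Icc (0:ℝ) b, f z ^ 2 ≤ z * I2 b := by
    intro z hz
    have h2 : g 0 = 0 := by simp [hg, hI1, hI2]
    have h1 : (0:ℝ) ≤ g z := by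
      have := hgmono (Set.left_mem_Icc.mpr hb.le) hz hz.1
      rwa [h2] at this
    have h3 : I1 z ^ 2 ≤ z * I2 z := by simp only [hg] at h1; linarith
    calc f z ^ 2 = I1 z ^ 2 := by rw [hfz]
      _ ≤ z * I2 z := h3
      _ ≤ z * I2 b := mul_le_mul_of_nonneg_left (hI2mono z hz) hz.1
  calc ∫ z in (0:ℝ)..b, f z ^ 2 ≤ ∫ z in (0:ℝ)..b, z * I2 b := by
        apply intervalIntegral.integral_mono_on hb.le
          (((hf.continuous).pow 2).intervalIntegrable _ _)
          ((continuous_id.mul continuous_const).intervalIntegrable _ _) hpt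
    _ = b ^ 2 / 2 * I2 b := by
        rw [intervalIntegral.integral_mul_const, integral_id]
        ring


/-- **Exponential decay of the target-system energy.**
Let `α > 0`, `b > 0`, `ν ≤ 0`, let `μ` be continuous with `μ z t ≤ 0` for all
`(z,t) ∈ [0,b] × [0,∞)`, and let `w` (twice continuously differentiable in `z`, continuously
differentiable in `t` with jointly continuous `∂ₜ w`) satisfy
`∂ₜ w = α ∂_z² w + μ w` for `z ∈ (0,b)` and `t ≥ 0`, `w 0 t = 0`, and
`∂_z w (b,t) = ν w (b,t)`.  Then the energy `E t = ∫₀ᵇ w(z,t)² dz` decays exponentially: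
`E t ≤ E 0 * exp (−(4α/b²) t)` for all `t ≥ 0`. -/
theorem target_system_exponential_stability
    (α b ν : ℝ) (hα : 0 < α) (hb : 0 < b) (hν : ν ≤ 0)
    (μ : ℝ → ℝ → ℝ) (hμ : Continuous fun p : ℝ × ℝ => μ p.1 p.2)
    (hμ_nonpos : ∀ z ∈ Set.Icc 0 b, ∀ t : ℝ, 0 ≤ t → μ z t ≤ 0)
    (w : ℝ → ℝ → ℝ)
    (hwz : ∀ t, ContDiff ℝ 2 (fun z => w z t))
    (hwt : ∀ z, ContDiff ℝ 1 (fun t => w z t))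
    (hwt_cont : Continuous fun p : ℝ × ℝ => deriv (fun τ => w p.1 τ) p.2)
    (hpde : ∀ t : ℝ, 0 ≤ t → ∀ z ∈ Set.Ioo 0 b,
      deriv (fun τ => w z τ) t = α * deriv (deriv (fun x => w x t)) z + μ z t * w z t)
    (hdir : ∀ t : ℝ, 0 ≤ t → w 0 t = 0)
    (hrobin : ∀ t : ℝ, 0 ≤ t → deriv (fun x => w x t) b = ν * w b t)
    (En : ℝ → ℝ)
    (hEn : ∀ t, En t = ∫ z in (0:ℝ)..b, (w z t) ^ 2) :
    ∀ t : ℝ, 0 ≤ t → En t ≤ En 0 * Real.exp (-(4 * α / b ^ 2) * t) := by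
  set c : ℝ := 4 * α / b ^ 2 with hc
  have hEnf : En = fun t => ∫ z in (0:ℝ)..b, w z t ^ 2 := funext hEn
  have hw_c : ∀ t, Continuous fun z => w z t := fun t => (hwz t).continuous
  have hwt_d : ∀ z t, HasDerivAt (fun τ => w z τ) (deriv (fun τ => w z τ) t) t :=
    fun z t => ((hwt z).differentiable one_ne_zero t).hasDerivAt
  -- Step 1: derivative of the energy
  have hEd : ∀ t₀ : ℝ, HasDerivAt (fun t => ∫ z in (0:ℝ)..b, w z t ^ 2)
      (∫ z in (0:ℝ)..b, 2 * w z t₀ * deriv (fun τ => w z τ) t₀) t₀ := by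
    intro t₀
    obtain ⟨M, hM⟩ := (isCompact_Icc.prod isCompact_Icc :
        IsCompact (Set.Icc (0:ℝ) b ×ˢ Set.Icc (t₀ - 1) (t₀ + 1))).exists_bound_of_continuousOn
        hwt_cont.continuousOn
    set M' : ℝ := max M 0 with hM'
    have hM'0 : (0:ℝ) ≤ M' := le_max_right _ _
    have hMle : ∀ z ∈ Set.Icc (0:ℝ) b, ∀ x ∈ Set.Icc (t₀-1) (t₀+1),
        |deriv (fun τ => w z τ) x| ≤ M' := fun z hz x hx =>
      le_trans (hM (z, x) ⟨hz, hx⟩) (le_max_left _ _)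
    have hdz : Continuous fun z => deriv (fun τ => w z τ) t₀ :=
      hwt_cont.comp (continuous_id.prodMk continuous_const)
    have key := intervalIntegral.hasDerivAt_integral_of_dominated_loc_of_deriv_le
      (F := fun x z => w z x ^ 2)
      (F' := fun x z => 2 * w z x * deriv (fun τ => w z τ) x)
      (a := 0) (b := b) (x₀ := t₀) (μ := MeasureTheory.volume)
      (bound := fun z => 2 * (|w z t₀| + M') * M')
      (Metric.ball_mem_nhds t₀ one_pos)
      (Filter.Eventually.of_forall fun x => ((hw_c x).pow 2).aestronglyMeasurable)
      (((hw_c t₀).pow 2).intervalIntegrable _ _)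
      ((continuous_const.mul (hw_c t₀)).mul hdz).aestronglyMeasurable
      ?_
      (((continuous_const.mul ((hw_c t₀).abs.add continuous_const)).mul
        continuous_const).intervalIntegrable _ _)
      (Filter.Eventually.of_forall fun z _ x _ => by
        simpa using (hwt_d z x).fun_pow 2)
    · exact key.2
    · apply Filter.Eventually.of_forall
      intro z hz x hx
      rw [Set.uIoc_of_le hb.le] at hz
      have hzI : z ∈ Set.Icc (0:ℝ) b := ⟨hz.1.le, hz.2⟩
      have hxd : |x - t₀| < 1 := by rwa [Metric.mem_ball, Real.dist_eq] at hx
      have hxI : x ∈ Set.Icc (t₀-1) (t₀+1) := by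
        rw [abs_sub_lt_iff] at hxd
        constructor <;> linarith [hxd.1, hxd.2]
      have ht₀I : t₀ ∈ Set.Icc (t₀-1) (t₀+1) := by constructor <;> linarith
      have hlip : ‖w z x - w z t₀‖ ≤ M' * ‖x - t₀‖ :=
        Convex.norm_image_sub_le_of_norm_hasDerivWithin_le
          (f := fun τ => w z τ) (f' := fun τ => deriv (fun τ => w z τ) τ)
          (fun y hy => (hwt_d z y).hasDerivWithinAt)
          (fun y hy => by simpa [Real.norm_eq_abs] using hMle z hzI y hy)
          (convex_Icc _ _) ht₀I hxI
      have hwx : |w z x| ≤ |w z t₀| + M' := by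
        have h1 : ‖x - t₀‖ ≤ 1 := by rw [Real.norm_eq_abs]; exact hxd.le
        have h2 : |w z x - w z t₀| ≤ M' := by
          calc |w z x - w z t₀| ≤ M' * ‖x - t₀‖ := hlip
            _ ≤ M' * 1 := by gcongr
            _ = M' := mul_one _
        calc |w z x| = |w z t₀ + (w z x - w z t₀)| := by ring_nf
          _ ≤ |w z t₀| + |w z x - w z t₀| := abs_add_le _ _
          _ ≤ |w z t₀| + M' := by linarith
      have hdx : |deriv (fun τ => w z τ) x| ≤ M' := hMle z hzI x hxI
      rw [Real.norm_eq_abs, abs_mul, abs_mul, abs_two]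
      have h2w : 2 * |w z x| ≤ 2 * (|w z t₀| + M') := by linarith
      exact mul_le_mul h2w hdx (abs_nonneg _) (by positivity)
  -- Step 2: differential inequality
  have hDle : ∀ t : ℝ, 0 ≤ t →
      (∫ z in (0:ℝ)..b, 2 * w z t * deriv (fun τ => w z τ) t) ≤ -c * En t := by
    intro t ht
    set f : ℝ → ℝ := fun z => w z t with hfdef
    have hf2 : ContDiff ℝ 2 f := hwz t
    have hf1 : ContDiff ℝ 1 f := hf2.of_le one_le_two
    have hfd : Differentiable ℝ f := hf1.differentiable one_ne_zero
    have hf' : Continuous (deriv f) := hf2.continuous_deriv one_le_two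
    have hf'1 : ContDiff ℝ 1 (deriv f) := by
      have h2 : ContDiff ℝ (1 + 1) f := by
        rw [show ((1:WithTop ℕ∞) + 1) = 2 by norm_num]
        exact hf2
      exact (contDiff_succ_iff_deriv.mp h2).2.2
    have hf'' : Continuous (deriv (deriv f)) := hf'1.continuous_deriv le_rfl
    have hf'd : Differentiable ℝ (deriv f) := hf'1.differentiable one_ne_zero
    have hcong : (∫ z in (0:ℝ)..b, 2 * w z t * deriv (fun τ => w z τ) t)
        = ∫ z in (0:ℝ)..b, (2 * α * (f z * deriv (deriv f) z) + 2 * (μ z t * f z ^ 2)) := by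
      apply intervalIntegral.integral_congr_ae
      have hbne : ∀ᵐ z : ℝ ∂MeasureTheory.volume, z ≠ b := by
        rw [MeasureTheory.ae_iff]
        simp only [not_not]
        simp only [not_not, Set.setOf_eq_eq_singleton]
        exact Real.volume_singleton
      filter_upwards [hbne] with z hzb hz
      rw [Set.uIoc_of_le hb.le] at hz
      have hzo : z ∈ Set.Ioo 0 b := ⟨hz.1, lt_of_le_of_ne hz.2 hzb⟩
      rw [hpde t ht z hzo]
      ring
    rw [hcong]
    have hμc : Continuous fun z => μ z t := hμ.comp (continuous_id.prodMk continuous_const)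
    have hInt1 : IntervalIntegrable (fun z => 2 * α * (f z * deriv (deriv f) z))
        MeasureTheory.volume 0 b :=
      (continuous_const.mul (hf1.continuous.mul hf'')).intervalIntegrable _ _
    have hInt2 : IntervalIntegrable (fun z => 2 * (μ z t * f z ^ 2)) MeasureTheory.volume 0 b :=
      (continuous_const.mul (hμc.mul (hf1.continuous.pow 2))).intervalIntegrable _ _
    rw [intervalIntegral.integral_add hInt1 hInt2, intervalIntegral.integral_const_mul,
      intervalIntegral.integral_const_mul]
    set A : ℝ := ∫ z in (0:ℝ)..b, f z * deriv (deriv f) z with hA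
    set B : ℝ := ∫ z in (0:ℝ)..b, μ z t * f z ^ 2 with hB
    set P : ℝ := ∫ z in (0:ℝ)..b, deriv f z ^ 2 with hP
    -- integration by parts
    have hibp : (∫ z in (0:ℝ)..b, (deriv f z * deriv f z + f z * deriv (deriv f) z))
        = f b * deriv f b - f 0 * deriv f 0 :=
      intervalIntegral.integral_deriv_mul_eq_sub_of_hasDerivAt
        (u := f) (v := deriv f) (u' := deriv f) (v' := deriv (deriv f))
        hf1.continuous.continuousOn hf'.continuousOn
        (fun x _ => (hfd x).hasDerivAt) (fun x _ => (hf'd x).hasDerivAt)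
        (hf'.intervalIntegrable _ _) (hf''.intervalIntegrable _ _)
    have hsplit : (∫ z in (0:ℝ)..b, (deriv f z * deriv f z + f z * deriv (deriv f) z))
        = P + A := by
      rw [show (fun z => deriv f z * deriv f z + f z * deriv (deriv f) z)
          = fun z => deriv f z ^ 2 + f z * deriv (deriv f) z by funext z; ring]
      exact intervalIntegral.integral_add ((hf'.pow 2).intervalIntegrable _ _)
        ((hf1.continuous.mul hf'').intervalIntegrable _ _)
    have hf0 : f 0 = 0 := hdir t ht
    have hfb : deriv f b = ν * f b := hrobin t ht
    have hAval : A = ν * f b ^ 2 - P := by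
      rw [hsplit] at hibp
      rw [hf0, hfb] at hibp
      nlinarith [hibp]
    -- B ≤ 0
    have hBle : B ≤ 0 := by
      have h := intervalIntegral.integral_nonneg (μ := MeasureTheory.volume) (f := fun z => -(μ z t * f z ^ 2)) hb.le
        (fun u hu => by
          nlinarith [mul_nonneg (neg_nonneg.mpr (hμ_nonpos u hu t ht)) (sq_nonneg (f u))])
      rw [intervalIntegral.integral_neg] at h
      rw [hB]; linarith
    -- Poincaré
    have hpoin : En t ≤ b ^ 2 / 2 * P := by
      rw [hEn t]
      exact poincare_sq b hb f hf1 hf0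
    have hc2 : c * (b ^ 2 / 2 * P) = 2 * α * P := by
      rw [hc]; field_simp; ring
    have hcpos : 0 < c := by rw [hc]; positivity
    have hfact1 : c * En t ≤ 2 * α * P := by
      calc c * En t ≤ c * (b ^ 2 / 2 * P) := mul_le_mul_of_nonneg_left hpoin hcpos.le
        _ = 2 * α * P := hc2
    have hfact2 : 2 * α * (ν * f b ^ 2) ≤ 0 := by nlinarith [mul_nonneg (mul_nonneg hα.le (neg_nonneg.mpr hν)) (sq_nonneg (f b))]
    rw [hAval]
    nlinarith [hBle, hfact1, hfact2]
  -- Step 3: Gronwall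
  have hg : ∀ t : ℝ, HasDerivAt (fun t => En t * Real.exp (c * t))
      ((∫ z in (0:ℝ)..b, 2 * w z t * deriv (fun τ => w z τ) t) * Real.exp (c * t)
        + En t * (Real.exp (c * t) * c)) t := by
    intro t
    have h1 : HasDerivAt En (∫ z in (0:ℝ)..b, 2 * w z t * deriv (fun τ => w z τ) t) t := by
      rw [hEnf]; exact hEd t
    have h2 : HasDerivAt (fun t => Real.exp (c * t)) (Real.exp (c * t) * c) t := by
      simpa using ((hasDerivAt_id t).const_mul c).exp
    exact h1.mul h2
  have hanti : AntitoneOn (fun t => En t * Real.exp (c * t)) (Set.Ici 0) := by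
    apply antitoneOn_of_deriv_nonpos (convex_Ici 0)
    · exact (Differentiable.continuous fun t => (hg t).differentiableAt).continuousOn
    · intro t _
      exact (hg t).differentiableAt.differentiableWithinAt
    · intro t ht
      rw [interior_Ici] at ht
      rw [(hg t).deriv]
      have hD := hDle t ht.le
      have hexp : (0:ℝ) < Real.exp (c * t) := Real.exp_pos _
      nlinarith [mul_le_mul_of_nonneg_right hD hexp.le]
  intro t ht
  have h1 : En t * Real.exp (c * t) ≤ En 0 * Real.exp (c * 0) :=
    hanti Set.self_mem_Ici ht ht
  rw [mul_zero, Real.exp_zero, mul_one] at h1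
  have hexp : (0:ℝ) < Real.exp (c * t) := Real.exp_pos _
  have h2 : En t ≤ En 0 / Real.exp (c * t) := by rwa [le_div_iff₀ hexp]
  calc En t ≤ En 0 / Real.exp (c * t) := h2
    _ = En 0 * Real.exp (-c * t) := by
        rw [show -c * t = -(c * t) by ring, Real.exp_neg, div_eq_mul_inv]
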